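/- Let G be a finite simple connected prime graph with at least 3 vertices, let u be a vertex of G, and let S ⊆ V be a u-transitive set such that V ≠ S ∪ N[u]. Then there exists an extremity v of G with v ∉ S, v ∉ N[u], and d(u,v) = max{ d(u,w) : w ∈ V \ S }. -/

import Mathlib

variable {V : Type*}

/-- The closed neighbourhood `N[v]` of a vertex. -/
def closedNbhd (G : SimpleGraph V) (v : V) : Set V := insert v (G.neighborSet v)

/-- `N[S] = ⋃_{v ∈ S} N[v]`. -/
def closedNbhdSet (G : SimpleGraph V) (S : Set V) : Set V := ⋃ v ∈ S, closedNbhd G v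

/-- A vertex `v` is an extremity if the subgraph induced on `V \ N[v]` is
connected (possibly empty). -/
def IsExtremity (G : SimpleGraph V) (v : V) : Prop :=
  (G.induce (closedNbhd G v)ᶜ).Preconnected

/-- `M` is a module: every vertex outside `M` is adjacent to all of `M` or none of `M`. -/
def IsModuleSet (G : SimpleGraph V) (M : Set V) : Prop :=
  ∀ z ∉ M, ∀ x ∈ M, ∀ y ∈ M, (G.Adj z x ↔ G.Adj z y)

/-- A graph is prime if its only modules are `∅`, `V` and the singletons. -/
def IsPrimeGraph (G : SimpleGraph V) : Prop :=
  ∀ M : Set V, IsModuleSet G M → M = ∅ ∨ M = Set.univ ∨ ∃ v, M = {v}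

/-- Eccentricity of a vertex in a finite graph. -/
noncomputable def ecc [Fintype V] (G : SimpleGraph V) (u : V) : ℕ :=
  Finset.univ.sup (G.dist u)

/-- Diameter of a finite graph. -/
noncomputable def gdiam [Fintype V] (G : SimpleGraph V) : ℕ :=
  Finset.univ.sup fun u => ecc G u

/-- `u ⊥_w v`: vertices `u` and `v` lie in different connected components of the
subgraph induced on `V \ N[w]`. -/
def Perp (G : SimpleGraph V) (w u v : V) : Prop :=
  u ∉ closedNbhd G w ∧ v ∉ closedNbhd G w ∧
    ¬ ∃ p : G.Walk u v, ∀ z ∈ p.support, z ∉ closedNbhd G w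

/-- `S` is `u`-transitive: for every `x ∈ S` and vertex `y` distinct from and
nonadjacent to `x`, `x ⊥_y u` implies `y ∈ S`. -/
def UTransitive (G : SimpleGraph V) (u : V) (S : Set V) : Prop :=
  ∀ x ∈ S, ∀ y : V, y ≠ x → ¬ G.Adj x y → Perp G y x u → y ∈ S

/-- `S` is a dominating set: every vertex lies in `N[S]`. -/
def IsDominatingSet (G : SimpleGraph V) (S : Set V) : Prop :=
  ∀ v : V, ∃ s ∈ S, v ∈ closedNbhd G s

/-- `D` is a dominating target: every superset of `D` inducing a connected
subgraph is a dominating set. -/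
def IsDomTarget (G : SimpleGraph V) (D : Set V) : Prop :=
  ∀ S : Set V, D ⊆ S → (G.induce S).Connected → IsDominatingSet G S

/-- An asteroidal set: an independent set `A` such that for every `a ∈ A`, all
vertices of `A \ {a}` lie in a single connected component of the subgraph
induced on `V \ N[a]`. -/
def IsAsteroidalSet (G : SimpleGraph V) (A : Set V) : Prop :=
  (A.Pairwise fun x y => ¬ G.Adj x y) ∧
  ∀ a ∈ A, ∀ b ∈ A, ∀ c ∈ A, b ≠ a → c ≠ a →
    ∃ p : G.Walk b c, ∀ z ∈ p.support, z ∉ closedNbhd G a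

open SimpleGraph in
private lemma induce_reachable_of_walk {G : SimpleGraph V} {s : Set V} :
    ∀ {a b : V} (p : G.Walk a b), (∀ z ∈ p.support, z ∈ s) →
      ∀ (ha : a ∈ s) (hb : b ∈ s), (G.induce s).Reachable ⟨a, ha⟩ ⟨b, hb⟩ := by
  intro a b p
  induction p with
  | nil => intro _ ha hb; exact Reachable.refl _
  | @cons a c b hadj q ih =>
      intro hp ha hb
      have hc : c ∈ s := hp c (by simp [Walk.support_cons])
      have h1 : (G.induce s).Adj ⟨a, ha⟩ ⟨c, hc⟩ := by
        simp only [comap_adj, Function.Embedding.coe_subtype]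
        exact hadj
      exact h1.reachable.trans
        (ih (fun z hz => hp z (by simp [Walk.support_cons, hz])) hc hb)

theorem stmt_12 [Fintype V] (G : SimpleGraph V) (hG : G.Connected)
    (hprime : IsPrimeGraph G) (hcard : 3 ≤ Fintype.card V)
    (u : V) (S : Set V) (hS : UTransitive G u S)
    (hne : S ∪ closedNbhd G u ≠ Set.univ) :
    ∃ v : V, IsExtremity G v ∧ v ∉ S ∧ v ∉ closedNbhd G u ∧
      ∀ w : V, w ∉ S → G.dist u w ≤ G.dist u v := by
  classical
  have hNmem : ∀ a b : V, b ∈ closedNbhd G a ↔ b = a ∨ G.Adj a b := by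
    intro a b
    simp [closedNbhd]
  -- a vertex outside S ∪ N[u]
  obtain ⟨w0, hw0⟩ : ∃ w0, w0 ∉ S ∪ closedNbhd G u := by
    by_contra h
    push_neg at h
    exact hne (Set.eq_univ_of_forall h)
  have hw0S : w0 ∉ S := fun h => hw0 (Set.mem_union_left _ h)
  have hw0N : w0 ∉ closedNbhd G u := fun h => hw0 (Set.mem_union_right _ h)
  -- maximal distance over V \ S
  have hTne : (Finset.univ.filter (fun w => w ∉ S)).Nonempty :=
    ⟨w0, by simp [hw0S]⟩
  obtain ⟨vm, hvmT, hvmmax⟩ := Finset.exists_max_image _ (G.dist u) hTne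
  have hvmS : vm ∉ S := (Finset.mem_filter.mp hvmT).2
  set k := G.dist u vm with hk
  have hmax : ∀ w : V, w ∉ S → G.dist u w ≤ k := by
    intro w hw
    exact hvmmax w (Finset.mem_filter.mpr ⟨Finset.mem_univ _, hw⟩)
  have hk2 : 2 ≤ k := by
    have h0 : G.dist u w0 ≤ k := hmax w0 hw0S
    have hne0 : w0 ≠ u := by
      intro h; exact hw0N ((hNmem u w0).mpr (Or.inl h))
    have hnadj : ¬ G.Adj u w0 := by
      intro h; exact hw0N ((hNmem u w0).mpr (Or.inr h))
    have hd0 : G.dist u w0 ≠ 0 := by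
      intro h
      rcases SimpleGraph.dist_eq_zero_iff_eq_or_not_reachable.mp h with h | h
      · exact hne0 h.symm
      · exact h (hG u w0)
    have hd1 : G.dist u w0 ≠ 1 := by
      intro h; exact hnadj (SimpleGraph.dist_eq_one_iff_adj.mp h)
    omega
  -- the set of max-distance vertices outside S
  set W : Set V := {w | w ∉ S ∧ G.dist u w = k} with hW
  have hvmW : vm ∈ W := ⟨hvmS, rfl⟩
  -- basic facts for v ∈ W
  have hWu : ∀ v ∈ W, u ∉ closedNbhd G v ∧ v ∉ closedNbhd G u := by
    intro v hv
    have hdv : G.dist u v = k := hv.2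
    have hvu : v ≠ u := by
      intro h; rw [h, SimpleGraph.dist_self] at hdv; omega
    have hnadj : ¬ G.Adj u v := by
      intro h
      have := SimpleGraph.dist_eq_one_iff_adj.mpr h
      omega
    constructor
    · intro h
      rcases (hNmem v u).mp h with h | h
      · exact hvu h.symm
      · exact hnadj h.symm
    · intro h
      rcases (hNmem u v).mp h with h | h
      · exact hvu h
      · exact hnadj h
  -- reachability from u avoiding N[v]
  set R : V → V → Prop :=
    fun v x => ∃ p : G.Walk u x, ∀ z ∈ p.support, z ∉ closedNbhd G v with hR
  set B : V → Set V := fun v => {x | x ∉ closedNbhd G v ∧ ¬ R v x} with hB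
  -- B v ⊆ W for v ∈ W
  have hBsubW : ∀ v ∈ W, B v ⊆ W := by
    intro v hv x hx
    obtain ⟨hxN, hxR⟩ := hx
    have hxv : x ≠ v := by
      intro h; exact hxN ((hNmem v x).mpr (Or.inl h))
    have hperp : Perp G v x u := by
      refine ⟨hxN, (hWu v hv).1, ?_⟩
      rintro ⟨p, hp⟩
      exact hxR ⟨p.reverse, fun z hz => hp z (by
        rw [SimpleGraph.Walk.support_reverse] at hz
        exact List.mem_reverse.mp hz)⟩
    have hxS : x ∉ S := by
      intro hxS
      refine hv.1 (hS x hxS v (Ne.symm hxv) ?_ hperp)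
      intro h
      exact hxN ((hNmem v x).mpr (Or.inr h.symm))
    refine ⟨hxS, le_antisymm (hmax x hxS) ?_⟩
    -- lower bound: every u-x walk meets N[v]
    obtain ⟨p, hp⟩ := hG.exists_walk_length_eq_dist u x
    obtain ⟨z, hzsup, hzN⟩ : ∃ z ∈ p.support, z ∈ closedNbhd G v := by
      by_contra h
      push_neg at h
      exact hxR ⟨p, h⟩
    have hzx : z ≠ x := fun h => hxN (h ▸ hzN)
    have hlen : (p.takeUntil z hzsup).length + (p.dropUntil z hzsup).length
        = p.length := by
      conv_rhs => rw [← p.take_spec hzsup]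
      rw [SimpleGraph.Walk.length_append]
    have hduz : G.dist u z ≤ (p.takeUntil z hzsup).length :=
      SimpleGraph.dist_le _
    have hdzx : G.dist z x ≤ (p.dropUntil z hzsup).length :=
      SimpleGraph.dist_le _
    have hzx1 : 1 ≤ G.dist z x := hG.pos_dist_of_ne hzx
    have hz1 : k ≤ G.dist u z + 1 := by
      rcases (hNmem v z).mp hzN with h | h
      · rw [← hv.2, ← h]; exact Nat.le_succ _
      · have htri : G.dist u v ≤ G.dist u z + G.dist z v := hG.dist_triangle
        have h1 : G.dist z v = 1 := SimpleGraph.dist_eq_one_iff_adj.mpr h.symm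
        rw [hv.2, h1] at htri
        exact htri
    omega
  -- one-step backward adjacency propagation
  have hONE : ∀ v, ∀ b ∈ B v, ∀ z, z ∉ B v → z ≠ v → G.Adj z b → G.Adj z v := by
    intro v b hb z hzB hzv hzb
    by_contra hzvAdj
    have hzN : z ∉ closedNbhd G v := by
      intro h
      rcases (hNmem v z).mp h with h | h
      · exact hzv h
      · exact hzvAdj h.symm
    have hnR : ¬ R v z := by
      rintro ⟨p, hp⟩
      refine hb.2 ⟨p.concat hzb, ?_⟩
      intro z' hz'
      rw [SimpleGraph.Walk.support_concat] at hz'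
      rcases List.mem_append.mp hz' with h | h
      · exact hp z' h
      · rw [List.mem_singleton.mp h]; exact hb.1
    exact hzB ⟨hzN, hnR⟩
  by_cases hext : ∃ v ∈ W, B v = ∅
  · -- an extremity exists
    obtain ⟨v, hvW, hBv⟩ := hext
    have hreach : ∀ x, x ∉ closedNbhd G v → R v x := by
      intro x hx
      have : x ∉ B v := by rw [hBv]; exact Set.notMem_empty x
      rw [hB] at this
      simp only [Set.mem_setOf_eq, not_and, not_not] at this
      exact this hx
    refine ⟨v, ?_, hvW.1, (hWu v hvW).2, ?_⟩
    · -- extremity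
      rintro ⟨x, hx⟩ ⟨y, hy⟩
      rw [Set.mem_compl_iff] at hx hy
      obtain ⟨px, hpx⟩ := hreach x hx
      obtain ⟨py, hpy⟩ := hreach y hy
      have hsupp : ∀ z ∈ (px.reverse.append py).support, z ∈ (closedNbhd G v)ᶜ := by
        intro z hz
        rw [SimpleGraph.Walk.mem_support_append_iff] at hz
        rcases hz with hz | hz
        · rw [SimpleGraph.Walk.support_reverse] at hz
          exact hpx z (List.mem_reverse.mp hz)
        · exact hpy z hz
      exact induce_reachable_of_walk (px.reverse.append py) hsupp hx hy
    · intro w hw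
      rw [hvW.2]
      exact hmax w hw
  · -- otherwise: build a nontrivial module, contradicting primality
    exfalso
    push_neg at hext
    set step : V → V → Prop := fun a b => b ∈ B a with hstep
    set Rset : V → Set V := fun a => {w | Relation.ReflTransGen step a w} with hRset
    have hRsetW : ∀ a ∈ W, Rset a ⊆ W := by
      intro a ha w hw
      simp only [hRset, Set.mem_setOf_eq] at hw
      induction hw with
      | refl => exact ha
      | tail h1 h2 ih => exact hBsubW _ ih h2
    obtain ⟨v0, hv0F, hmin⟩ := Finset.exists_min_image
      (Finset.univ.filter (fun a => a ∈ W)) (fun a => (Rset a).ncard)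
      ⟨vm, by simp [hvmW]⟩
    have hv0W : v0 ∈ W := (Finset.mem_filter.mp hv0F).2
    set Q : Set V := Rset v0 with hQ
    have hv0Q : v0 ∈ Q := Relation.ReflTransGen.refl
    have hQW : Q ⊆ W := hRsetW v0 hv0W
    have hQclosed : ∀ a ∈ Q, B a ⊆ Q := by
      intro a ha x hx
      exact Relation.ReflTransGen.tail ha hx
    have hQstrong : ∀ w ∈ Q, Relation.ReflTransGen step w v0 := by
      intro w hw
      have hsub : Rset w ⊆ Q := by
        intro x hx
        exact Relation.ReflTransGen.trans hw hx
      have hcard : Q.ncard ≤ (Rset w).ncard :=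
        hmin w (Finset.mem_filter.mpr ⟨Finset.mem_univ _, hQW hw⟩)
      have heq : Rset w = Q := Set.eq_of_subset_of_ncard_le hsub hcard (Set.toFinite _)
      have : v0 ∈ Rset w := heq ▸ hv0Q
      exact this
    -- backward propagation of adjacency along chains inside Q
    have hprop : ∀ z ∉ Q, ∀ a ∈ Q, ∀ b, Relation.ReflTransGen step a b →
        G.Adj z b → G.Adj z a := by
      intro z hz a ha b hab
      induction hab with
      | refl => exact id
      | @tail c d h1 h2 ih =>
          intro hadj
          have hcQ : c ∈ Q := Relation.ReflTransGen.trans ha h1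
          have hzB : z ∉ B c := fun h => hz (hQclosed c hcQ h)
          have hzc : z ≠ c := fun h => hz (h ▸ hcQ)
          exact ih (hONE c d h2 z hzB hzc hadj)
    have hmod : IsModuleSet G Q := by
      intro z hz x hx y hy
      have hyx : Relation.ReflTransGen step y x :=
        Relation.ReflTransGen.trans (hQstrong y hy) hx
      have hxy : Relation.ReflTransGen step x y :=
        Relation.ReflTransGen.trans (hQstrong x hx) hy
      constructor
      · intro h
        exact hprop z hz y hy x hyx h
      · intro h
        exact hprop z hz x hx y hxy h
    rcases hprime Q hmod with h | h | ⟨w, h⟩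
    · rw [h] at hv0Q; exact hv0Q
    · have huQ : u ∈ Q := by rw [h]; trivial
      have := (hQW huQ).2
      rw [SimpleGraph.dist_self] at this
      omega
    · obtain ⟨b, hb⟩ := hext v0 hv0W
      have hbQ : b ∈ Q := hQclosed v0 hv0Q hb
      have hbv0 : b = v0 := by
        rw [h] at hbQ hv0Q
        rw [hbQ, ← hv0Q]
      exact hb.1 (hbv0 ▸ (hNmem v0 b).mpr (Or.inl hbv0))
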